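/- Let B be a block containing exactly y ones and exactly y + 2 zeros (in any arrangement), for some y ≥ 0. Then p(B) = p(B)^1; that is, the number of permutations of [2y+2] with pinnacle set P_B equals the number of rearrangements of {1, …, 2y+2, 2y+3} whose pinnacle set is P_B ∪ {2y+3}. -/
import Mathlib


/-- The pinnacle multiset of a finite sequence `w` (given as a list, possibly with
repeated entries): the multiset of values `w t` at interior positions `t` with
`w (t-1) < w t > w (t+1)`. -/
def pinMultiset (w : List ℕ) : Multiset ℕ :=
  ↑(((List.range w.length).filter (fun t =>
      decide (0 < t ∧ t + 1 < w.length ∧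
        w.getD (t - 1) 0 < w.getD t 0 ∧ w.getD (t + 1) 0 < w.getD t 0))).map
    (fun t => w.getD t 0))

/-- `P_B`: the set (as a multiset, with no repetitions) of 1-indexed positions of the
entries of the block `B` that are equal to 1 (`true`). -/
def blockPins (B : List Bool) : Multiset ℕ :=
  ↑(((List.range B.length).filter (fun t => B.getD t false)).map (fun t => t + 1))

/-- `pB B i j` is `p(B)^i_j`: the number of rearrangements `w` of the multiset
`{1, …, m} ⊎ {j copies of 0} ⊎ {i copies of m+1}` (where `m` is the length of block `B`)
whose pinnacle multiset is `P_B ⊎ {i copies of m+1}` and in which no two entries equal to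
`0` are adjacent. -/
noncomputable def pB (B : List Bool) (i j : ℕ) : ℕ :=
  {w : List ℕ |
    w.Perm (List.range' 1 B.length ++ List.replicate j 0 ++
      List.replicate i (B.length + 1)) ∧
    pinMultiset w = blockPins B + Multiset.replicate i (B.length + 1) ∧
    ∀ t : ℕ, t + 1 < w.length → ¬(w.getD t 0 = 0 ∧ w.getD (t + 1) 0 = 0)}.ncard

def Pin (w : List ℕ) (t : ℕ) : Prop :=
  0 < t ∧ t + 1 < w.length ∧
    w.getD (t - 1) 0 < w.getD t 0 ∧ w.getD (t + 1) 0 < w.getD t 0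

instance (w : List ℕ) (t : ℕ) : Decidable (Pin w t) := by unfold Pin; infer_instance

lemma pinMultiset_eq (w : List ℕ) :
    pinMultiset w = ((Finset.range w.length).filter (fun t => Pin w t)).val.map
      (fun t => w.getD t 0) := by
  rw [pinMultiset]
  rw [Finset.filter_val, Finset.range_val, Multiset.range, Multiset.filter_coe,
    Multiset.map_coe]
  rfl

lemma count_pinMultiset (w : List ℕ) (v : ℕ) :
    (pinMultiset w).count v =
      ((Finset.range w.length).filter (fun t => Pin w t ∧ v = w.getD t 0)).card := by
  rw [pinMultiset_eq, Multiset.count_map, ← Finset.filter_val, Finset.filter_filter,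
    ← Finset.card_def]

section Core
variable (a b : List ℕ) (M : ℕ)

lemma getD_lt_of_forall {l : List ℕ} (h : ∀ x ∈ l, x < M) {t : ℕ} (ht : t < l.length) :
    l.getD t 0 < M := by
  rw [List.getD_eq_getElem _ _ ht]; exact h _ (List.getElem_mem ht)

lemma getD_w_lt {t : ℕ} (ht : t < a.length) :
    (a ++ M :: b).getD t 0 = (a ++ b).getD t 0 := by
  rw [List.getD_append _ _ _ _ ht, List.getD_append _ _ _ _ ht]

lemma getD_w_k : (a ++ M :: b).getD a.length 0 = M := by
  rw [List.getD_append_right _ _ _ _ le_rfl]; simp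

lemma getD_w_gt {t : ℕ} (ht : a.length < t) :
    (a ++ M :: b).getD t 0 = (a ++ b).getD (t - 1) 0 := by
  rw [List.getD_append_right _ _ _ _ (by omega), List.getD_append_right _ _ _ _ (by omega)]
  obtain ⟨s, rfl⟩ := Nat.exists_eq_add_of_lt ht
  have h1 : a.length + s + 1 - a.length = s + 1 := by omega
  have h2 : a.length + s + 1 - 1 - a.length = s := by omega
  rw [h1, h2, List.getD_cons_succ]

variable (ha : ∀ x ∈ a, x < M) (hb : ∀ x ∈ b, x < M)

include ha hb in
lemma getD_u_lt {t : ℕ} (ht : t < (a ++ b).length) : (a ++ b).getD t 0 < M := by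
  refine getD_lt_of_forall _ (fun x hx => ?_) ht
  rcases List.mem_append.1 hx with h | h
  exacts [ha x h, hb x h]

include ha hb in
lemma getD_w_ne_k {t : ℕ} (htl : t < (a ++ M :: b).length) (htk : t ≠ a.length) :
    (a ++ M :: b).getD t 0 < M := by
  rcases lt_or_gt_of_ne htk with h | h
  · rw [getD_w_lt a b M h]
    exact getD_u_lt a b M ha hb (by simpa using by simp at htl; omega)
  · rw [getD_w_gt a b M h]
    refine getD_u_lt a b M ha hb ?_
    simp at htl ⊢
    omega

include ha hb in
lemma pin_w_k (hk : 0 < a.length) (hb' : b ≠ []) : Pin (a ++ M :: b) a.length := by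
  have hbl : 0 < b.length := List.length_pos_iff.2 hb'
  refine ⟨hk, by simp; omega, ?_, ?_⟩
  · rw [getD_w_k, getD_w_lt a b M (by omega)]
    exact getD_u_lt a b M ha hb (by simp; omega)
  · rw [getD_w_k, getD_w_gt a b M (by omega)]
    exact getD_u_lt a b M ha hb (by simp; omega)

include ha in
lemma not_pin_w_pred : ¬ Pin (a ++ M :: b) (a.length - 1) := by
  rintro ⟨h0, hlen, h1, h2⟩
  have hk : a.length - 1 + 1 = a.length := by omega
  rw [hk, getD_w_k] at h2
  have : (a ++ M :: b).getD (a.length - 1) 0 < M := by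
    rw [getD_w_lt a b M (by omega), List.getD_append _ _ _ _ (by omega)]
    exact getD_lt_of_forall M ha (by omega)
  omega

include hb in
lemma not_pin_w_succ : ¬ Pin (a ++ M :: b) (a.length + 1) := by
  rintro ⟨h0, hlen, h1, h2⟩
  rw [Nat.add_sub_cancel, getD_w_k] at h1
  have : (a ++ M :: b).getD (a.length + 1) 0 < M := by
    rw [getD_w_gt a b M (by omega), Nat.add_sub_cancel,
      List.getD_append_right _ _ _ _ le_rfl, Nat.sub_self]
    exact getD_lt_of_forall M hb (by simp at hlen; omega)
  omega

lemma pin_w_low {t : ℕ} (hlt : t + 1 < a.length) :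
    Pin (a ++ M :: b) t ↔ Pin (a ++ b) t := by
  unfold Pin
  rw [getD_w_lt a b M (by omega), getD_w_lt a b M (by omega), getD_w_lt a b M hlt]
  simp only [List.length_append, List.length_cons]
  constructor <;> rintro ⟨h0, h1, h2, h3⟩ <;> exact ⟨h0, by omega, h2, h3⟩

lemma pin_w_high {t : ℕ} (hgt : a.length + 1 < t) :
    Pin (a ++ M :: b) t ↔ Pin (a ++ b) (t - 1) := by
  unfold Pin
  rw [getD_w_gt a b M (by omega), getD_w_gt a b M (by omega), getD_w_gt a b M (by omega)]
  have e1 : t - 1 - 1 = t - 1 - 1 := rfl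
  have e2 : t + 1 - 1 = t - 1 + 1 := by omega
  rw [e2]
  simp only [List.length_append, List.length_cons]
  constructor <;> rintro ⟨h0, h1, h2, h3⟩ <;> exact ⟨by omega, by omega, h2, h3⟩

include ha hb in
lemma star (hk : 0 < a.length) (hb' : b ≠ []) :
    pinMultiset (a ++ M :: b) +
      (((Finset.range (a ++ b).length).filter
        (fun s => Pin (a ++ b) s ∧ (s = a.length - 1 ∨ s = a.length))).val.map
        (fun s => (a ++ b).getD s 0))
    = pinMultiset (a ++ b) + {M} := by
  classical
  set k := a.length with hkdef
  set u := a ++ b with hudef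
  set w := a ++ M :: b with hwdef
  have hwlen : w.length = u.length + 1 := by simp [hwdef, hudef]; omega
  have hulen : k ≤ u.length := by simp [hudef, hkdef]
  have hbl : 0 < b.length := List.length_pos_iff.2 hb'
  have hulen' : k < u.length := by simp [hudef, hkdef]; omega
  -- key fact about pinnacle positions of w
  have hTfact : ∀ t, Pin w t → t ≠ k → t + 1 < k ∨ k + 1 < t := by
    intro t hpt htk
    have h1 : t ≠ k - 1 := by
      rintro rfl
      exact not_pin_w_pred a b M ha hpt
    have h2 : t ≠ k + 1 := by
      rintro rfl
      exact not_pin_w_succ a b M hb hpt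
    have h0 := hpt.1
    omega
  ext v
  rw [Multiset.count_add, Multiset.count_add, count_pinMultiset, count_pinMultiset,
    Multiset.count_map, ← Finset.filter_val, Finset.filter_filter, ← Finset.card_def]
  rw [hwlen]
  by_cases hv : v = M
  · have hT : (Finset.range (u.length + 1)).filter (fun t => Pin w t ∧ v = w.getD t 0)
        = {k} := by
      ext t
      simp only [Finset.mem_filter, Finset.mem_range, Finset.mem_singleton]
      constructor
      · rintro ⟨htr, hpt, hval⟩
        by_contra htk
        rw [hv] at hval
        exact absurd hval.symm
          (Nat.ne_of_lt (getD_w_ne_k a b M ha hb (by rw [hwlen]; omega) htk))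
      · rintro rfl
        exact ⟨by omega, pin_w_k a b M ha hb hk hb', by rw [hv]; exact (getD_w_k a b M).symm⟩
    have hF : (Finset.range u.length).filter
        (fun s => (Pin u s ∧ (s = k - 1 ∨ s = k)) ∧ v = u.getD s 0) = ∅ := by
      rw [Finset.filter_eq_empty_iff]
      rintro s hs ⟨⟨_, _⟩, hval⟩
      rw [hv] at hval
      exact absurd hval.symm
        (Nat.ne_of_lt (getD_u_lt a b M ha hb (Finset.mem_range.1 hs)))
    have hU : (Finset.range u.length).filter (fun t => Pin u t ∧ v = u.getD t 0) = ∅ := by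
      rw [Finset.filter_eq_empty_iff]
      rintro s hs ⟨_, hval⟩
      rw [hv] at hval
      exact absurd hval.symm
        (Nat.ne_of_lt (getD_u_lt a b M ha hb (Finset.mem_range.1 hs)))
    rw [hT, hF, hU, hv]
    simp
  · rw [Multiset.count_singleton, if_neg hv, add_zero]
    have hFU : (Finset.range u.length).filter
          (fun s => (Pin u s ∧ (s = k - 1 ∨ s = k)) ∧ v = u.getD s 0)
        ⊆ (Finset.range u.length).filter (fun t => Pin u t ∧ v = u.getD t 0) := by
      intro s hs
      simp only [Finset.mem_filter, Finset.mem_range] at hs ⊢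
      tauto
    rw [← Finset.card_sdiff_add_card_eq_card hFU]
    congr 1
    refine Finset.card_bij (fun t _ => if t < k then t else t - 1) ?_ ?_ ?_
    · intro t ht
      simp only [Finset.mem_filter, Finset.mem_range] at ht
      obtain ⟨htr, hpt, hval⟩ := ht
      have htk : t ≠ k := by
        rintro rfl
        exact hv (hval.trans (getD_w_k a b M))
      simp only [Finset.mem_sdiff, Finset.mem_filter, Finset.mem_range]
      rcases hTfact t hpt htk with hlow | hhigh
      · rw [if_pos (by omega)]
        have hput : Pin u t := (pin_w_low a b M hlow).1 hpt
        have hvu : v = u.getD t 0 := hval.trans (getD_w_lt a b M (by omega))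
        refine ⟨⟨by omega, hput, hvu⟩, fun hcon => ?_⟩
        rcases hcon.2.1.2 with h | h <;> omega
      · rw [if_neg (by omega)]
        have hput : Pin u (t - 1) := (pin_w_high a b M hhigh).1 hpt
        have hvu : v = u.getD (t - 1) 0 := hval.trans (getD_w_gt a b M (by omega))
        refine ⟨⟨by omega, hput, hvu⟩, fun hcon => ?_⟩
        rcases hcon.2.1.2 with h | h <;> omega
    · intro t1 h1 t2 h2 heq
      simp only [Finset.mem_filter, Finset.mem_range] at h1 h2
      have htk1 : t1 ≠ k := by rintro rfl; exact hv (h1.2.2.trans (getD_w_k a b M))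
      have htk2 : t2 ≠ k := by rintro rfl; exact hv (h2.2.2.trans (getD_w_k a b M))
      have f1 := hTfact t1 h1.2.1 htk1
      have f2 := hTfact t2 h2.2.1 htk2
      have heq' : (if t1 < k then t1 else t1 - 1) = (if t2 < k then t2 else t2 - 1) := heq
      split_ifs at heq' <;> omega
    · intro s hs
      simp only [Finset.mem_sdiff, Finset.mem_filter, Finset.mem_range] at hs
      obtain ⟨⟨hsr, hps, hval⟩, hnot⟩ := hs
      have hor : ¬(s = k - 1 ∨ s = k) := fun h => hnot ⟨hsr, ⟨hps, h⟩, hval⟩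
      by_cases hsk : s < k
      · have hs1 : s + 1 < k := by omega
        have hmem : s ∈ Finset.filter (fun t => Pin w t ∧ v = w.getD t 0)
            (Finset.range (u.length + 1)) := by
          simp only [Finset.mem_filter, Finset.mem_range]
          exact ⟨by omega, (pin_w_low a b M hs1).2 hps,
            hval.trans (getD_w_lt a b M (by omega)).symm⟩
        exact ⟨s, hmem, by simp only [if_pos hsk]⟩
      · have hsk' : k + 1 < s + 1 := by omega
        have hmem : s + 1 ∈ Finset.filter (fun t => Pin w t ∧ v = w.getD t 0)
            (Finset.range (u.length + 1)) := by
          simp only [Finset.mem_filter, Finset.mem_range]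
          refine ⟨by omega, (pin_w_high a b M hsk').2 (by rw [Nat.add_sub_cancel]; exact hps),
            by rw [getD_w_gt a b M (by omega), Nat.add_sub_cancel]; exact hval⟩
        exact ⟨s + 1, hmem, by simp only [if_neg (by omega : ¬ s + 1 < k)]; omega⟩

end Core

def pinSet (u : List ℕ) : Finset ℕ := (Finset.range u.length).filter (fun t => Pin u t)

lemma mem_pinSet {u : List ℕ} {t : ℕ} : t ∈ pinSet u ↔ Pin u t := by
  simp only [pinSet, Finset.mem_filter, Finset.mem_range]
  exact ⟨fun h => h.2, fun h => ⟨by have := h.2.1; omega, h⟩⟩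

lemma card_pinMultiset (u : List ℕ) : Multiset.card (pinMultiset u) = (pinSet u).card := by
  rw [pinMultiset_eq, Multiset.card_map, pinSet, Finset.card_def]

lemma pin_not_adjacent {u : List ℕ} {t : ℕ} (h1 : Pin u t) (h2 : Pin u (t + 1)) : False := by
  obtain ⟨-, -, -, ha⟩ := h1
  obtain ⟨-, -, hb, -⟩ := h2
  rw [Nat.add_sub_cancel] at hb
  omega

section Slots

variable (u : List ℕ) (y : ℕ) (hlen : u.length = 2 * y + 2)

noncomputable def slotD (u : List ℕ) : Finset ℕ :=
  ((pinSet u) ×ˢ ({0, 1} : Finset ℕ)).image (fun p => p.1 + p.2)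

lemma card_slotD : (slotD u).card = 2 * (pinSet u).card := by
  rw [slotD, Finset.card_image_of_injOn, Finset.card_product]
  · simp [Nat.mul_comm]
  · rintro ⟨t1, b1⟩ h1 ⟨t2, b2⟩ h2 heq
    simp only [Finset.mem_coe, Finset.mem_product, Finset.mem_insert,
      Finset.mem_singleton] at h1 h2
    have heq' : t1 + b1 = t2 + b2 := heq
    have hp1 := mem_pinSet.1 h1.1
    have hp2 := mem_pinSet.1 h2.1
    have hb1 := h1.2
    have hb2 := h2.2
    have : t1 = t2 + 1 ∨ t2 = t1 + 1 ∨ t1 = t2 := by omega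
    rcases this with h | h | h
    · exact absurd (h ▸ hp1) (fun hc => pin_not_adjacent hp2 hc)
    · exact absurd (h ▸ hp2) (fun hc => pin_not_adjacent hp1 hc)
    · subst h
      have : b1 = b2 := by omega
      rw [this]

lemma mem_slotD {kk : ℕ} : kk ∈ slotD u ↔ Pin u kk ∨ (1 ≤ kk ∧ Pin u (kk - 1)) := by
  simp only [slotD, Finset.mem_image, Finset.mem_product, Finset.mem_insert,
    Finset.mem_singleton, Prod.exists]
  constructor
  · rintro ⟨t, bb, ⟨ht, hbb⟩, rfl⟩
    have hp := mem_pinSet.1 ht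
    rcases hbb with rfl | rfl
    · exact Or.inl (by simpa using hp)
    · exact Or.inr ⟨by omega, by simpa using hp⟩
  · rintro (h | ⟨h1, h⟩)
    · exact ⟨kk, 0, ⟨mem_pinSet.2 h, Or.inl rfl⟩, by omega⟩
    · exact ⟨kk - 1, 1, ⟨mem_pinSet.2 h, Or.inr rfl⟩, by omega⟩

include hlen in
lemma slotD_subset : slotD u ⊆ Finset.Icc 1 (2 * y + 1) := by
  intro kk hkk
  rcases (mem_slotD u).1 hkk with h | ⟨h1, h⟩ <;>
    · have := h.1
      have := h.2.1
      rw [hlen] at *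
      simp only [Finset.mem_Icc]
      omega

include hlen in
lemma card_pinSet_le : (pinSet u).card ≤ y := by
  have h1 := Finset.card_le_card (slotD_subset u y hlen)
  rw [card_slotD, Nat.card_Icc] at h1
  omega

include hlen in
lemma free_slot_exists_unique (hcard : (pinSet u).card = y) :
    ∃! kk : ℕ, (1 ≤ kk ∧ kk ≤ 2 * y + 1) ∧ ¬Pin u (kk - 1) ∧ ¬Pin u kk := by
  have hmem : ∀ kk : ℕ, ((1 ≤ kk ∧ kk ≤ 2 * y + 1) ∧ ¬Pin u (kk - 1) ∧ ¬Pin u kk) ↔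
      kk ∈ Finset.Icc 1 (2 * y + 1) \ slotD u := by
    intro kk
    simp only [Finset.mem_sdiff, Finset.mem_Icc, mem_slotD]
    constructor
    · rintro ⟨⟨h1, h2⟩, h3, h4⟩
      exact ⟨⟨h1, h2⟩, by rintro (h | ⟨-, h⟩) <;> tauto⟩
    · rintro ⟨⟨h1, h2⟩, h⟩
      push_neg at h
      exact ⟨⟨h1, h2⟩, fun hc => (h.2 h1) hc, h.1⟩
  have hcd : (Finset.Icc 1 (2 * y + 1) \ slotD u).card = 1 := by
    rw [Finset.card_sdiff_of_subset (slotD_subset u y hlen), card_slotD, hcard, Nat.card_Icc]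
    omega
  obtain ⟨kk0, hk0⟩ := Finset.card_eq_one.1 hcd
  refine ⟨kk0, ?_, ?_⟩
  · exact (hmem kk0).2 (hk0 ▸ Finset.mem_singleton_self kk0)
  · intro kk hkk
    have := (hmem kk).1 hkk
    rw [hk0, Finset.mem_singleton] at this
    exact this

end Slots

lemma card_blockPins (B : List Bool) : Multiset.card (blockPins B) = B.count true := by
  rw [blockPins]
  rw [Multiset.coe_card, List.length_map]
  induction B using List.reverseRecOn with
  | nil => simp
  | append_singleton C x ih =>
    rw [List.length_append, List.length_singleton, List.range_succ, List.filter_append,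
      List.length_append, List.count_append]
    have h1 : (List.range C.length).filter (fun t => (C ++ [x]).getD t false)
        = (List.range C.length).filter (fun t => C.getD t false) := by
      refine List.filter_congr (fun t ht => ?_)
      rw [List.getD_append _ _ _ _ (by simpa using ht)]
    rw [h1, ih]
    have h2 : ([C.length].filter (fun t => (C ++ [x]).getD t false)).length
        = List.count true [x] := by
      have : (C ++ [x]).getD C.length false = x := by
        rw [List.getD_append_right _ _ _ _ le_rfl, Nat.sub_self]
        rfl
      cases x <;> simp [List.filter, this]
    omega

lemma length_bool (B : List Bool) : B.length = B.count true + B.count false := by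
  induction B with
  | nil => simp
  | cons x C ih =>
    rw [List.length_cons, List.count_cons, List.count_cons, ih]
    cases x <;> simp <;> omega

lemma no_zero_cond {u L : List ℕ} (hperm : u.Perm L) (hL : ∀ x ∈ L, 0 < x) :
    ∀ t : ℕ, t + 1 < u.length → ¬(u.getD t 0 = 0 ∧ u.getD (t + 1) 0 = 0) := by
  rintro t ht ⟨h0, -⟩
  have hmem : u.getD t 0 ∈ u := by
    rw [List.getD_eq_getElem _ _ (by omega)]
    exact List.getElem_mem _
  have := hL _ (hperm.subset hmem)
  omega

lemma erase_mid {a b : List ℕ} {M : ℕ} (hMa : M ∉ a) : (a ++ M :: b).erase M = a ++ b := by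
  rw [List.erase_append_right _ hMa, List.erase_cons_head]

lemma deletion (B : List Bool) (y : ℕ) (hones : B.count true = y)
    (hm : B.length = 2 * y + 2) (w : List ℕ)
    (hperm : w.Perm (List.range' 1 B.length ++ [B.length + 1]))
    (hpin : pinMultiset w = blockPins B + {B.length + 1}) :
    ∃ a b : List ℕ, w = a ++ (B.length + 1) :: b ∧ (B.length + 1) ∉ a ∧
      (B.length + 1) ∉ b ∧ 0 < a.length ∧ b ≠ [] ∧
      pinMultiset (a ++ b) = blockPins B ∧
      ¬Pin (a ++ b) (a.length - 1) ∧ ¬Pin (a ++ b) a.length := by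
  classical
  set M := B.length + 1 with hMdef
  have hMrange : M ∉ List.range' 1 B.length := by
    simp only [List.mem_range'_1]
    omega
  have hMw : M ∈ w := hperm.mem_iff.2 (by simp)
  obtain ⟨a, b, rfl⟩ := List.append_of_mem hMw
  have hcount : (a ++ M :: b).count M = 1 := by
    rw [hperm.count_eq, List.count_append, List.count_eq_zero.2 hMrange]
    simp
  have hMa : M ∉ a := by
    rw [List.count_append, List.count_cons_self] at hcount
    exact List.count_eq_zero.1 (by omega)
  have hMb : M ∉ b := by
    rw [List.count_append, List.count_cons_self] at hcount
    exact List.count_eq_zero.1 (by omega)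
  have hsub : ∀ x, x ∈ a ++ M :: b → x ≠ M → x < M := by
    intro x hx hxM
    have := hperm.subset hx
    rcases List.mem_append.1 this with h | h
    · have := List.mem_range'_1.1 h
      omega
    · simp at h
      omega
  have ha : ∀ x ∈ a, x < M := fun x hx =>
    hsub x (List.mem_append.2 (Or.inl hx)) (fun h => hMa (h ▸ hx))
  have hb : ∀ x ∈ b, x < M := fun x hx =>
    hsub x (by simp [hx]) (fun h => hMb (h ▸ hx))
  -- the position of M is a pinnacle
  have hMpin : ∃ t, Pin (a ++ M :: b) t ∧ M = (a ++ M :: b).getD t 0 := by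
    have h1 : 0 < (pinMultiset (a ++ M :: b)).count M := by
      rw [hpin, Multiset.count_add, Multiset.count_singleton_self]
      omega
    rw [count_pinMultiset] at h1
    obtain ⟨t, ht⟩ := Finset.card_pos.1 h1
    simp only [Finset.mem_filter, Finset.mem_range] at ht
    exact ⟨t, ht.2⟩
  obtain ⟨t, hpt, hval⟩ := hMpin
  have htk : t = a.length := by
    by_contra htk
    exact absurd hval.symm
      (Nat.ne_of_lt (getD_w_ne_k a b M ha hb (by have := hpt.2.1; omega) htk))
  subst htk
  have hk : 0 < a.length := hpt.1
  have hbne : b ≠ [] := by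
    have := hpt.2.1
    simp only [List.length_append, List.length_cons] at this
    exact List.ne_nil_of_length_pos (by omega)
  have hul : (a ++ b).length = 2 * y + 2 := by
    have h1 := hperm.length_eq
    simp only [List.length_append, List.length_cons, List.length_range', List.length_nil] at h1 ⊢
    omega
  have hstar := star a b M ha hb hk hbne
  set E := (((Finset.range (a ++ b).length).filter
      (fun s => Pin (a ++ b) s ∧ (s = a.length - 1 ∨ s = a.length))).val.map
      (fun s => (a ++ b).getD s 0)) with hEdef
  rw [hpin] at hstar
  have h2 : blockPins B + E + {M} = pinMultiset (a ++ b) + {M} := by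
    rw [add_right_comm]
    exact hstar
  have hE : pinMultiset (a ++ b) = blockPins B + E := (add_right_cancel h2).symm
  have hcard : (pinSet (a ++ b)).card = y + Multiset.card E := by
    rw [← card_pinMultiset, hE, Multiset.card_add, card_blockPins, hones]
  have hle := card_pinSet_le (a ++ b) y hul
  have hE0 : Multiset.card E = 0 := by omega
  have hEempty : (Finset.range (a ++ b).length).filter
      (fun s => Pin (a ++ b) s ∧ (s = a.length - 1 ∨ s = a.length)) = ∅ := by
    rw [← Finset.card_eq_zero]
    rw [hEdef, Multiset.card_map, ← Finset.card_def] at hE0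
    exact hE0
  have hfree : ∀ s, Pin (a ++ b) s → ¬(s = a.length - 1 ∨ s = a.length) := by
    intro s hs hor
    have hsr : s ∈ Finset.range (a ++ b).length := Finset.mem_range.2 (by
      have := hs.2.1; omega)
    have : s ∈ (Finset.range (a ++ b).length).filter
        (fun s => Pin (a ++ b) s ∧ (s = a.length - 1 ∨ s = a.length)) :=
      Finset.mem_filter.2 ⟨hsr, hs, hor⟩
    rw [hEempty] at this
    exact absurd this (Finset.notMem_empty s)
  refine ⟨a, b, rfl, hMa, hMb, hk, hbne, ?_, ?_, ?_⟩
  · rw [hE, Multiset.card_eq_zero.1 hE0, add_zero]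
  · exact fun hp => hfree _ hp (Or.inl rfl)
  · exact fun hp => hfree _ hp (Or.inr rfl)

lemma insertion (B : List Bool) (y : ℕ) (hones : B.count true = y)
    (hm : B.length = 2 * y + 2) (u : List ℕ)
    (hperm : u.Perm (List.range' 1 B.length))
    (hpin : pinMultiset u = blockPins B) :
    ∃ w : List ℕ, w.Perm (List.range' 1 B.length ++ [B.length + 1]) ∧
      pinMultiset w = blockPins B + {B.length + 1} ∧ w.erase (B.length + 1) = u := by
  classical
  set M := B.length + 1 with hMdef
  have hul : u.length = 2 * y + 2 := by
    rw [hperm.length_eq, List.length_range', hm]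
  have hcard : (pinSet u).card = y := by
    rw [← card_pinMultiset, hpin, card_blockPins, hones]
  obtain ⟨kk, ⟨⟨hk1, hk2⟩, hfree1, hfree2⟩, -⟩ :=
    free_slot_exists_unique u y hul hcard
  set a := u.take kk with hadef
  set b := u.drop kk with hbdef
  have hab : a ++ b = u := List.take_append_drop kk u
  have hal : a.length = kk := by
    rw [hadef, List.length_take]
    omega
  have hbne : b ≠ [] := by
    refine List.ne_nil_of_length_pos ?_
    have : a.length + b.length = u.length := by rw [← List.length_append, hab]
    omega
  have hentries : ∀ x ∈ u, x < M := by
    intro x hx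
    have := List.mem_range'_1.1 (hperm.subset hx)
    omega
  have ha : ∀ x ∈ a, x < M := fun x hx => hentries x (by rw [← hab]; simp [hx])
  have hb : ∀ x ∈ b, x < M := fun x hx => hentries x (by rw [← hab]; simp [hx])
  have hMa : M ∉ a := fun h => by have := ha M h; omega
  have hstar := star a b M ha hb (by omega) hbne
  rw [hab] at hstar
  have hEempty : (Finset.range u.length).filter
      (fun s => Pin u s ∧ (s = a.length - 1 ∨ s = a.length)) = ∅ := by
    rw [Finset.filter_eq_empty_iff]
    rintro s - ⟨hps, hor⟩
    rw [hal] at hor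
    rcases hor with rfl | rfl
    exacts [hfree1 hps, hfree2 hps]
  rw [hEempty] at hstar
  simp only [Finset.empty_val, Multiset.map_zero, add_zero] at hstar
  refine ⟨a ++ M :: b, ?_, ?_, ?_⟩
  · refine List.perm_middle.trans ?_
    rw [hab]
    exact ((hperm.cons M).trans (List.perm_append_singleton M _).symm)
  · rw [hstar, hpin]
  · rw [erase_mid hMa, hab]

theorem add_one_large_pinnacle (B : List Bool) (y : ℕ)
    (hones : B.count true = y) (hzeros : B.count false = y + 2) :
    pB B 0 0 = pB B 1 0 := by
  classical
  have hm : B.length = 2 * y + 2 := by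
    rw [length_bool, hones, hzeros]
    omega
  set M := B.length + 1 with hMdef
  set L0 := List.range' 1 B.length with hL0def
  have hL0pos : ∀ x ∈ L0, 0 < x := by
    intro x hx
    have := List.mem_range'_1.1 hx
    omega
  have hL1pos : ∀ x ∈ L0 ++ [M], 0 < x := by
    intro x hx
    rcases List.mem_append.1 hx with h | h
    · exact hL0pos x h
    · simp at h
      omega
  set S0 : Set (List ℕ) := {w | w.Perm L0 ∧ pinMultiset w = blockPins B} with hS0def
  set S1 : Set (List ℕ) :=
    {w | w.Perm (L0 ++ [M]) ∧ pinMultiset w = blockPins B + {M}} with hS1def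
  have e0 : pB B 0 0 = S0.ncard := by
    rw [pB]
    congr 1
    ext w
    simp only [hS0def, Set.mem_setOf_eq, List.replicate_zero, List.append_nil,
      Multiset.replicate_zero, add_zero]
    constructor
    · rintro ⟨h1, h2, -⟩
      exact ⟨h1, h2⟩
    · rintro ⟨h1, h2⟩
      exact ⟨h1, h2, no_zero_cond h1 hL0pos⟩
  have e1 : pB B 1 0 = S1.ncard := by
    rw [pB]
    congr 1
    ext w
    simp only [hS1def, Set.mem_setOf_eq, List.replicate_zero, List.append_nil,
      List.replicate_one, Multiset.replicate_one]
    constructor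
    · rintro ⟨h1, h2, -⟩
      exact ⟨h1, h2⟩
    · rintro ⟨h1, h2⟩
      exact ⟨h1, h2, no_zero_cond h1 hL1pos⟩
  have hML0 : M ∉ L0 := by
    simp only [hL0def, List.mem_range'_1]
    omega
  have heraseL1 : (L0 ++ [M]).erase M = L0 := by
    rw [List.erase_append_right _ hML0, List.erase_cons_head, List.append_nil]
  have hbij : Set.BijOn (fun w => w.erase M) S1 S0 := by
    refine ⟨?_, ?_, ?_⟩
    · intro w hw
      obtain ⟨a, b, rfl, hMa, hMb, hk, hbne, hpinu, hf1, hf2⟩ :=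
        deletion B y hones hm w hw.1 hw.2
      simp only [hS0def, Set.mem_setOf_eq]
      rw [erase_mid hMa]
      refine ⟨?_, hpinu⟩
      have := hw.1.erase M
      rw [erase_mid hMa, heraseL1] at this
      exact this
    · intro w1 h1 w2 h2 heq
      obtain ⟨a1, b1, rfl, hMa1, hMb1, hk1, hbne1, hpinu1, hf11, hf12⟩ :=
        deletion B y hones hm w1 h1.1 h1.2
      obtain ⟨a2, b2, rfl, hMa2, hMb2, hk2, hbne2, hpinu2, hf21, hf22⟩ :=
        deletion B y hones hm w2 h2.1 h2.2
      simp only at heq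
      rw [erase_mid hMa1, erase_mid hMa2] at heq
      set u := a1 ++ b1 with hudef
      have hul : u.length = 2 * y + 2 := by
        have := (h1.1.erase M).length_eq
        rw [erase_mid hMa1, heraseL1] at this
        rw [hudef, this, hL0def, List.length_range', hm]
      have hcard : (pinSet u).card = y := by
        rw [← card_pinMultiset, hudef, hpinu1, card_blockPins, hones]
      obtain ⟨kk, -, huniq⟩ := free_slot_exists_unique u y hul hcard
      have hb1l : 0 < b1.length := List.length_pos_iff.2 hbne1
      have hb2l : 0 < b2.length := List.length_pos_iff.2 hbne2
      have hlen1 : a1.length + b1.length = 2 * y + 2 := by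
        rw [← List.length_append]
        exact hul
      have hlen2 : a2.length + b2.length = 2 * y + 2 := by
        rw [← List.length_append, ← heq]
        exact hul
      have hu1 := huniq a1.length ⟨⟨by omega, by omega⟩, hf11, hf12⟩
      have hequ : (a2 ++ b2 : List ℕ) = u := heq.symm
      have hu2 : a2.length = kk :=
        huniq a2.length ⟨⟨by omega, by omega⟩, hequ ▸ hf21, hequ ▸ hf22⟩
      obtain ⟨rfl, rfl⟩ := List.append_inj heq (hu1.trans hu2.symm)
      rfl
    · intro u hu
      obtain ⟨w, hp, hpin, herase⟩ := insertion B y hones hm u hu.1 hu.2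
      exact ⟨w, ⟨hp, hpin⟩, herase⟩
  rw [e0, e1, ← hbij.image_eq, Set.ncard_image_of_injOn hbij.injOn]
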